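/- For any reals b₁, d₁, b₂, d₂ and σ > 0, the integral over all real t of |Φ((t−b₁)/σ)·Φ((d₁−t)/σ) − Φ((t−b₂)/σ)·Φ((d₂−t)/σ)| dt is at most |b₁−b₂| + |d₁−d₂|. -/
import Mathlib

open MeasureTheory Real Filter

noncomputable def phi (t : ℝ) : ℝ := Real.exp (-t^2/2) / Real.sqrt (2*Real.pi)

noncomputable def Phi (x : ℝ) : ℝ := ∫ s in Set.Iic x, phi s

lemma phi_nonneg (t : ℝ) : 0 ≤ phi t := by
  unfold phi; positivity

lemma integrable_phi : Integrable phi := by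
  have h : Integrable (fun t : ℝ => Real.exp (-(1/2:ℝ) * t^2)) :=
    integrable_exp_neg_mul_sq (by norm_num)
  have h2 := h.div_const (Real.sqrt (2*Real.pi))
  have : phi = fun t : ℝ => Real.exp (-(1/2:ℝ) * t^2) / Real.sqrt (2*Real.pi) := by
    funext t; unfold phi; ring_nf
  rw [this]; exact h2

lemma Phi_nonneg (x : ℝ) : 0 ≤ Phi x :=
  setIntegral_nonneg measurableSet_Iic fun t _ => phi_nonneg t

lemma Phi_le_one (x : ℝ) : Phi x ≤ 1 := by
  have h1 : Phi x ≤ ∫ t, phi t :=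
    setIntegral_le_integral integrable_phi (Eventually.of_forall phi_nonneg)
  have h2 : ∫ t, phi t = 1 := by
    have : (∫ t : ℝ, phi t) = (∫ t : ℝ, Real.exp (-(1/2:ℝ) * t^2)) / Real.sqrt (2*Real.pi) := by
      rw [← integral_div]; congr 1; funext t; unfold phi; ring_nf
    rw [this, integral_gaussian]
    rw [show Real.pi / (1/2 : ℝ) = 2 * Real.pi by ring]
    exact div_self (by positivity)
  linarith

lemma Phi_mono : Monotone Phi := fun x y hxy =>
  setIntegral_mono_set integrable_phi.integrableOn
    (Eventually.of_forall fun t => phi_nonneg t)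
    (HasSubset.Subset.eventuallyLE (Set.Iic_subset_Iic.mpr hxy))

/-- Master lemma: if `f : ℝ → ℝ` takes values in `[0,1]`, is interval integrable on all
compact intervals, and `f (t - h) ≤ f t` for all `t` with `0 ≤ h`, then
`t ↦ f t - f (t - h)` is integrable with integral at most `h`. -/
lemma master (f : ℝ → ℝ) (hf0 : ∀ t, 0 ≤ f t) (hf1 : ∀ t, f t ≤ 1)
    (hfi : ∀ a b : ℝ, IntervalIntegrable f volume a b)
    (h : ℝ) (hh : 0 ≤ h) (hsign : ∀ t, f (t - h) ≤ f t) :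
    Integrable (fun t => f t - f (t - h)) ∧ (∫ t, (f t - f (t - h))) ≤ h := by
  set g : ℝ → ℝ := fun t => f t - f (t - h) with hg
  have hgnn : ∀ t, 0 ≤ g t := fun t => sub_nonneg.mpr (hsign t)
  have hfi' : ∀ a b : ℝ, IntervalIntegrable (fun x => f (x - h)) volume a b := by
    intro a b
    have := (hfi (a - h) (b - h)).comp_sub_right h
    simpa using this
  have hgi : ∀ a b : ℝ, IntervalIntegrable g volume a b := fun a b =>
    (hfi a b).sub (hfi' a b)
  have bnd : ∀ R : ℝ, (∫ x in (-R)..R, g x) ≤ h := by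
    intro R
    have e0 : (∫ x in (-R)..R, g x) =
        (∫ x in (-R)..R, f x) - ∫ x in (-R)..R, f (x - h) :=
      intervalIntegral.integral_sub (hfi _ _) (hfi' _ _)
    have e1 : (∫ x in (-R)..R, f (x - h)) = ∫ x in (-R - h)..(R - h), f x :=
      intervalIntegral.integral_comp_sub_right f h
    have split1 : (∫ x in (-R - h)..(-R), f x) + (∫ x in (-R)..R, f x)
        = ∫ x in (-R - h)..R, f x :=
      intervalIntegral.integral_add_adjacent_intervals (hfi _ _) (hfi _ _)
    have split2 : (∫ x in (-R - h)..(R - h), f x) + (∫ x in (R - h)..R, f x)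
        = ∫ x in (-R - h)..R, f x :=
      intervalIntegral.integral_add_adjacent_intervals (hfi _ _) (hfi _ _)
    have e2 : (∫ x in (R - h)..R, f x) ≤ h := by
      have hb : R - h ≤ R := by linarith
      have mono : (∫ x in (R - h)..R, f x) ≤ ∫ x in (R - h)..R, (1:ℝ) :=
        intervalIntegral.integral_mono_on hb (hfi _ _) intervalIntegrable_const
          (fun x _ => hf1 x)
      have : (∫ x in (R - h)..R, (1:ℝ)) = h := by simp
      linarith
    have e3 : 0 ≤ ∫ x in (-R - h)..(-R), f x :=
      intervalIntegral.integral_nonneg (by linarith) (fun u _ => hf0 u)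
    rw [e0, e1]
    linarith
  have ha : Tendsto (fun n : ℕ => -(n:ℝ)) atTop atBot :=
    tendsto_neg_atBot_iff.mpr tendsto_natCast_atTop_atTop
  have hb : Tendsto (fun n : ℕ => (n:ℝ)) atTop atTop := tendsto_natCast_atTop_atTop
  have hns : ∀ n : ℕ, IntegrableOn g (Set.Ioc (-(n:ℝ)) ((n:ℝ))) volume := fun n =>
    (hgi _ _).1
  have hnorm : ∀ n : ℕ, (∫ x in (-(n:ℝ))..(n:ℝ), ‖g x‖) ≤ h := by
    intro n
    have : (∫ x in (-(n:ℝ))..(n:ℝ), ‖g x‖) = ∫ x in (-(n:ℝ))..(n:ℝ), g x := by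
      apply intervalIntegral.integral_congr
      intro x _
      simp [Real.norm_eq_abs, abs_of_nonneg (hgnn x)]
    rw [this]; exact bnd ((n:ℝ))
  have hInt : Integrable g :=
    integrable_of_intervalIntegral_norm_bounded h hns ha hb (Eventually.of_forall hnorm)
  refine ⟨hInt, ?_⟩
  have ht := intervalIntegral_tendsto_integral hInt ha hb
  exact le_of_tendsto ht (Eventually.of_forall fun n => bnd ((n:ℝ)))

lemma key_b (σ : ℝ) (hσ : 0 < σ) (b₁ b₂ : ℝ) (hb : b₁ ≤ b₂) :
    Integrable (fun t => |Phi ((t - b₁) / σ) - Phi ((t - b₂) / σ)|) ∧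
    (∫ t, |Phi ((t - b₁) / σ) - Phi ((t - b₂) / σ)|) ≤ b₂ - b₁ := by
  set f : ℝ → ℝ := fun t => Phi ((t - b₁) / σ) with hf
  have hmono : Monotone f := fun x y hxy =>
    Phi_mono (by apply (div_le_div_iff_of_pos_right hσ).mpr ?_; linarith)
  have hf0 : ∀ t, 0 ≤ f t := fun t => Phi_nonneg _
  have hf1 : ∀ t, f t ≤ 1 := fun t => Phi_le_one _
  have hfi : ∀ a b : ℝ, IntervalIntegrable f volume a b := fun a b =>
    hmono.intervalIntegrable
  set h : ℝ := b₂ - b₁ with hh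
  have hsign : ∀ t, f (t - h) ≤ f t := fun t => hmono (by linarith)
  have heq : ∀ t, f t - f (t - h) = |Phi ((t - b₁) / σ) - Phi ((t - b₂) / σ)| := by
    intro t
    have e : (t - h - b₁) / σ = (t - b₂) / σ := by rw [hh]; ring_nf
    have nn : 0 ≤ Phi ((t - b₁) / σ) - Phi ((t - b₂) / σ) := by
      rw [← e]; exact sub_nonneg.mpr (hsign t)
    rw [abs_of_nonneg nn, hf]
    simp only [e]
  obtain ⟨hi, hle⟩ := master f hf0 hf1 hfi h (by linarith) hsign
  have heqf : (fun t => f t - f (t - h)) =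
      fun t => |Phi ((t - b₁) / σ) - Phi ((t - b₂) / σ)| := funext heq
  rw [heqf] at hi hle
  exact ⟨hi, hle⟩

lemma key_d (σ : ℝ) (hσ : 0 < σ) (d₁ d₂ : ℝ) (hd : d₁ ≤ d₂) :
    Integrable (fun t => |Phi ((d₁ - t) / σ) - Phi ((d₂ - t) / σ)|) ∧
    (∫ t, |Phi ((d₁ - t) / σ) - Phi ((d₂ - t) / σ)|) ≤ d₂ - d₁ := by
  set f : ℝ → ℝ := fun t => 1 - Phi ((d₁ - t) / σ) with hf
  have hmono : Monotone f := by
    intro x y hxy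
    have : Phi ((d₁ - y) / σ) ≤ Phi ((d₁ - x) / σ) :=
      Phi_mono (by apply (div_le_div_iff_of_pos_right hσ).mpr ?_; linarith)
    simp only [hf]; linarith
  have hf0 : ∀ t, 0 ≤ f t := fun t => by
    have := Phi_le_one ((d₁ - t) / σ); simp only [hf]; linarith
  have hf1 : ∀ t, f t ≤ 1 := fun t => by
    have := Phi_nonneg ((d₁ - t) / σ); simp only [hf]; linarith
  have hfi : ∀ a b : ℝ, IntervalIntegrable f volume a b := fun a b =>
    hmono.intervalIntegrable
  set h : ℝ := d₂ - d₁ with hh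
  have hsign : ∀ t, f (t - h) ≤ f t := fun t => hmono (by linarith)
  have heq : ∀ t, f t - f (t - h) = |Phi ((d₁ - t) / σ) - Phi ((d₂ - t) / σ)| := by
    intro t
    have e : (d₁ - (t - h)) / σ = (d₂ - t) / σ := by rw [hh]; ring_nf
    have nn : Phi ((d₁ - t) / σ) ≤ Phi ((d₂ - t) / σ) := by
      have := hsign t
      simp only [hf] at this
      rw [e] at this
      linarith
    rw [abs_of_nonpos (by linarith), hf]
    simp only [e]
    ring
  obtain ⟨hi, hle⟩ := master f hf0 hf1 hfi h (by linarith) hsign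
  have heqf : (fun t => f t - f (t - h)) =
      fun t => |Phi ((d₁ - t) / σ) - Phi ((d₂ - t) / σ)| := funext heq
  rw [heqf] at hi hle
  exact ⟨hi, hle⟩

lemma key_b' (σ : ℝ) (hσ : 0 < σ) (b₁ b₂ : ℝ) :
    Integrable (fun t => |Phi ((t - b₁) / σ) - Phi ((t - b₂) / σ)|) ∧
    (∫ t, |Phi ((t - b₁) / σ) - Phi ((t - b₂) / σ)|) ≤ |b₁ - b₂| := by
  rcases le_total b₁ b₂ with hb | hb
  · obtain ⟨hi, hle⟩ := key_b σ hσ b₁ b₂ hb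
    refine ⟨hi, hle.trans ?_⟩
    rw [abs_sub_comm]; exact le_abs_self _
  · obtain ⟨hi, hle⟩ := key_b σ hσ b₂ b₁ hb
    have heq : (fun t => |Phi ((t - b₂) / σ) - Phi ((t - b₁) / σ)|) =
        fun t => |Phi ((t - b₁) / σ) - Phi ((t - b₂) / σ)| := by
      funext t; rw [abs_sub_comm]
    rw [heq] at hi hle
    exact ⟨hi, hle.trans (le_abs_self _)⟩

lemma key_d' (σ : ℝ) (hσ : 0 < σ) (d₁ d₂ : ℝ) :
    Integrable (fun t => |Phi ((d₁ - t) / σ) - Phi ((d₂ - t) / σ)|) ∧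
    (∫ t, |Phi ((d₁ - t) / σ) - Phi ((d₂ - t) / σ)|) ≤ |d₁ - d₂| := by
  rcases le_total d₁ d₂ with hd | hd
  · obtain ⟨hi, hle⟩ := key_d σ hσ d₁ d₂ hd
    refine ⟨hi, hle.trans ?_⟩
    rw [abs_sub_comm]; exact le_abs_self _
  · obtain ⟨hi, hle⟩ := key_d σ hσ d₂ d₁ hd
    have heq : (fun t => |Phi ((d₂ - t) / σ) - Phi ((d₁ - t) / σ)|) =
        fun t => |Phi ((d₁ - t) / σ) - Phi ((d₂ - t) / σ)| := by
      funext t; rw [abs_sub_comm]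
    rw [heq] at hi hle
    exact ⟨hi, hle.trans (le_abs_self _)⟩

lemma prod_abs_bound {p₁ q₁ p₂ q₂ : ℝ} (hp₁ : 0 ≤ p₁) (hp₁' : p₁ ≤ 1)
    (hq₁ : 0 ≤ q₁) (hq₁' : q₁ ≤ 1) (hp₂ : 0 ≤ p₂) (hp₂' : p₂ ≤ 1)
    (hq₂ : 0 ≤ q₂) (hq₂' : q₂ ≤ 1) :
    |p₁ * q₁ - p₂ * q₂| ≤ |p₁ - p₂| + |q₁ - q₂| := by
  have e : p₁ * q₁ - p₂ * q₂ = (p₁ - p₂) * q₁ + p₂ * (q₁ - q₂) := by ring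
  calc |p₁ * q₁ - p₂ * q₂| = |(p₁ - p₂) * q₁ + p₂ * (q₁ - q₂)| := by rw [e]
    _ ≤ |(p₁ - p₂) * q₁| + |p₂ * (q₁ - q₂)| := abs_add_le _ _
    _ = |p₁ - p₂| * |q₁| + |p₂| * |q₁ - q₂| := by rw [abs_mul, abs_mul]
    _ ≤ |p₁ - p₂| * 1 + 1 * |q₁ - q₂| := by
        gcongr
        · rw [abs_of_nonneg hq₁]; exact hq₁'
        · rw [abs_of_nonneg hp₂]; exact hp₂'
    _ = |p₁ - p₂| + |q₁ - q₂| := by ring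

theorem stmt7 (b₁ d₁ b₂ d₂ σ : ℝ) (hσ : 0 < σ) :
    ∫ t : ℝ, |Phi ((t - b₁) / σ) * Phi ((d₁ - t) / σ) -
        Phi ((t - b₂) / σ) * Phi ((d₂ - t) / σ)| ≤ |b₁ - b₂| + |d₁ - d₂| := by
  obtain ⟨hib, hlb⟩ := key_b' σ hσ b₁ b₂
  obtain ⟨hid, hld⟩ := key_d' σ hσ d₁ d₂
  have hgi : Integrable (fun t => |Phi ((t - b₁) / σ) - Phi ((t - b₂) / σ)| +
      |Phi ((d₁ - t) / σ) - Phi ((d₂ - t) / σ)|) := hib.add hid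
  have step1 : (∫ t : ℝ, |Phi ((t - b₁) / σ) * Phi ((d₁ - t) / σ) -
      Phi ((t - b₂) / σ) * Phi ((d₂ - t) / σ)|) ≤
      ∫ t : ℝ, (|Phi ((t - b₁) / σ) - Phi ((t - b₂) / σ)| +
        |Phi ((d₁ - t) / σ) - Phi ((d₂ - t) / σ)|) := by
    apply integral_mono_of_nonneg
    · exact Eventually.of_forall fun t => abs_nonneg _
    · exact hgi
    · exact Eventually.of_forall fun t =>
        prod_abs_bound (Phi_nonneg _) (Phi_le_one _) (Phi_nonneg _) (Phi_le_one _)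
          (Phi_nonneg _) (Phi_le_one _) (Phi_nonneg _) (Phi_le_one _)
  have step2 : (∫ t : ℝ, (|Phi ((t - b₁) / σ) - Phi ((t - b₂) / σ)| +
      |Phi ((d₁ - t) / σ) - Phi ((d₂ - t) / σ)|)) =
      (∫ t : ℝ, |Phi ((t - b₁) / σ) - Phi ((t - b₂) / σ)|) +
      ∫ t : ℝ, |Phi ((d₁ - t) / σ) - Phi ((d₂ - t) / σ)| :=
    integral_add hib hid
  linarith
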